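/- arXiv:1909.06915 — 5 statements merged into one kernel-verified Lean document; each statement's English description precedes it below -/
import Mathlib

section
/- Let p be a prime, p ≡ 1 (mod 6), and let q be a square root of −3 modulo p. The map ψ(a+bω) = (a − 2^{-1}b(q+1), a − 2^{-1}b(1−q)) defines a ring (hence group) isomorphism from Z_p[ω]^× onto Z_p^× × Z_p^×. -/
open Polynomial

/-- The ring of Eisenstein integers modulo `n`: `(ℤ/n)[x]/(x² + x + 1)`. -/
abbrev EisensteinMod (n : ℕ) : Type :=
  Polynomial (ZMod n) ⧸ Ideal.span {(X ^ 2 + X + 1 : Polynomial (ZMod n))}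

theorem eisenstein_psi_iso (p : ℕ) (hp : p.Prime) (h : p % 6 = 1)
    (q : ZMod p) (hq : q ^ 2 = -3) :
    ∃ e : EisensteinMod p ≃+* ZMod p × ZMod p,
      ∀ a b : ZMod p,
        e (Ideal.Quotient.mk _ (C a + C b * X)) =
          (a - 2⁻¹ * b * (q + 1), a - 2⁻¹ * b * (1 - q)) := by
  haveI : Fact p.Prime := ⟨hp⟩
  have hp2 : p ≠ 2 := by rintro rfl; simp at h
  have hp3 : p ≠ 3 := by rintro rfl; simp at h
  have h2 : (2 : ZMod p) ≠ 0 := by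
    have := ZMod.prime_ne_zero p 2 hp2
    simpa using this
  have h3 : (3 : ZMod p) ≠ 0 := by
    have := ZMod.prime_ne_zero p 3 hp3
    simpa using this
  have h2i : (2 : ZMod p)⁻¹ * 2 = 1 := inv_mul_cancel₀ h2
  have hqne : q ≠ 0 := by
    intro h0
    apply h3
    linear_combination hq - q * h0
  obtain ⟨r₁, hr₁⟩ : ∃ r : ZMod p, r = -(2⁻¹ * (q + 1)) := ⟨_, rfl⟩
  obtain ⟨r₂, hr₂⟩ : ∃ r : ZMod p, r = 2⁻¹ * (q - 1) := ⟨_, rfl⟩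
  have hsum : r₁ + r₂ = -1 := by
    rw [hr₁, hr₂]; linear_combination -h2i
  have hprod : r₁ * r₂ = 1 := by
    rw [hr₁, hr₂]
    linear_combination (-(2 : ZMod p)⁻¹ ^ 2) * hq + (2 * (2 : ZMod p)⁻¹ + 1) * h2i
  have hdiff : r₂ - r₁ = q := by
    rw [hr₁, hr₂]; linear_combination q * h2i
  have hne : r₂ - r₁ ≠ 0 := by rw [hdiff]; exact hqne
  have hsC : C r₁ + C r₂ = -1 := by rw [← map_add, hsum]; simp
  have hpC : C r₁ * C r₂ = 1 := by rw [← map_mul, hprod, map_one]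
  have hfactor : ((X : Polynomial (ZMod p)) - C r₁) * (X - C r₂) = X ^ 2 + X + 1 := by
    linear_combination (-(X : Polynomial (ZMod p))) * hsC + hpC
  have hco : IsCoprime (Ideal.span {(X : Polynomial (ZMod p)) - C r₁})
      (Ideal.span {(X : Polynomial (ZMod p)) - C r₂}) := by
    rw [Ideal.isCoprime_span_singleton_iff]
    refine ⟨C (r₂ - r₁)⁻¹, -(C (r₂ - r₁)⁻¹), ?_⟩
    have : C (r₂ - r₁)⁻¹ * (X - C r₁) + -(C (r₂ - r₁)⁻¹) * (X - C r₂)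
        = C ((r₂ - r₁)⁻¹ * (r₂ - r₁)) := by
      rw [map_mul, map_sub]; ring
    rw [this, inv_mul_cancel₀ hne, map_one]
  have hEq : Ideal.span {(X ^ 2 + X + 1 : Polynomial (ZMod p))}
      = Ideal.span {(X : Polynomial (ZMod p)) - C r₁} *
        Ideal.span {(X : Polynomial (ZMod p)) - C r₂} := by
    rw [Ideal.span_singleton_mul_span_singleton, hfactor]
  refine ⟨(Ideal.quotEquivOfEq hEq).trans
    ((Ideal.quotientMulEquivQuotientProd _ _ hco).trans
      (RingEquiv.prodCongr (quotientSpanXSubCAlgEquiv r₁).toRingEquiv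
        (quotientSpanXSubCAlgEquiv r₂).toRingEquiv)), ?_⟩
  intro a b
  have key : ∀ r : ZMod p,
      (quotientSpanXSubCAlgEquiv r) (Ideal.Quotient.mk (Ideal.span {X - C r})
        (C a + C b * X)) = a + b * r := by
    intro r
    rw [quotientSpanXSubCAlgEquiv_mk]
    simp
  simp only [RingEquiv.trans_apply, Ideal.quotEquivOfEq_mk,
    RingEquiv.coe_prodCongr, AlgEquiv.toRingEquiv_eq_coe, AlgEquiv.coe_ringEquiv]
  ext
  · simp only [Prod.map_fst, Ideal.quotientMulEquivQuotientProd_fst,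
      Ideal.Quotient.factor_mk, key]
    rw [hr₁]; ring
  · simp only [Prod.map_snd, Ideal.quotientMulEquivQuotientProd_snd,
      Ideal.Quotient.factor_mk, key]
    rw [hr₂]; ring
end

section
/- For m ≥ 5, the number of elements x of Z_{2^m}[ω] satisfying x⁴ = 1 is at most 32. -/
open Polynomial

private lemma eis_monic (n : ℕ) : (X^2+X+1 : (ZMod n)[X]).Monic := by
  have h : (X^2+X+1 : (ZMod n)[X]) = X^2 + (X+1) := by ring
  rw [h]
  apply Polynomial.monic_X_pow_add
  have h1 : (X+1 : (ZMod n)[X]).degree ≤ 1 := by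
    apply (Polynomial.degree_add_le _ _).trans
    exact max_le Polynomial.degree_X_le (Polynomial.degree_one_le.trans (by norm_num))
  exact lt_of_le_of_lt h1 (by norm_num)

private lemma eis_degree (n : ℕ) [Fact (1 < n)] : (X^2+X+1 : (ZMod n)[X]).degree = 2 := by
  compute_degree!

private lemma coords (n : ℕ) [Fact (1 < n)] (x : AdjoinRoot (X^2+X+1 : (ZMod n)[X])) :
    ∃ a b : ZMod n, x = AdjoinRoot.of _ a + AdjoinRoot.of _ b * AdjoinRoot.root _ := by
  obtain ⟨p, rfl⟩ := AdjoinRoot.mk_surjective x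
  set f : (ZMod n)[X] := X^2+X+1 with hf
  have hmod : AdjoinRoot.mk f p = AdjoinRoot.mk f (p %ₘ f) := by
    conv_lhs => rw [← Polynomial.modByMonic_add_div p f]
    rw [map_add, map_mul, AdjoinRoot.mk_self, zero_mul, add_zero]
  have hdeg1 : (p %ₘ f).degree ≤ 1 := by
    rcases Polynomial.degree_modByMonic_lt p (eis_monic n) with h
    exact Order.le_of_lt_succ (by rwa [eis_degree n] at h)
  have hr : p %ₘ f = C ((p %ₘ f).coeff 1) * X + C ((p %ₘ f).coeff 0) :=
    Polynomial.eq_X_add_C_of_degree_le_one hdeg1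
  refine ⟨(p %ₘ f).coeff 0, (p %ₘ f).coeff 1, ?_⟩
  rw [hmod]
  conv_lhs => rw [hr]
  rw [map_add, map_mul, AdjoinRoot.mk_C, AdjoinRoot.mk_C, AdjoinRoot.mk_X]
  ring

private lemma coords_inj (n : ℕ) [Fact (1 < n)] (a b : ZMod n)
    (h : AdjoinRoot.of (X^2+X+1 : (ZMod n)[X]) a + AdjoinRoot.of _ b * AdjoinRoot.root _ = 0) :
    a = 0 ∧ b = 0 := by
  set f : (ZMod n)[X] := X^2+X+1 with hf
  have h2 : AdjoinRoot.mk f (C a + C b * X) = 0 := by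
    rw [map_add, map_mul, AdjoinRoot.mk_C, AdjoinRoot.mk_C, AdjoinRoot.mk_X]
    exact h
  rw [AdjoinRoot.mk_eq_zero] at h2
  have hz : (C a + C b * X : (ZMod n)[X]) = 0 := by
    obtain ⟨g, hg⟩ := h2
    rcases eq_or_ne g 0 with h0 | h0
    · rw [hg, h0, mul_zero]
    · exfalso
      have hge : (2:WithBot ℕ) ≤ (C a + C b * X : (ZMod n)[X]).degree := by
        rw [hg, mul_comm, (eis_monic n).degree_mul, eis_degree n]
        exact le_add_of_nonneg_left (Polynomial.zero_le_degree_iff.mpr h0)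
      have hle : (C a + C b * X : (ZMod n)[X]).degree ≤ 1 := by
        rw [add_comm]
        exact Polynomial.degree_linear_le
      exact absurd (hge.trans hle) (by norm_num)
  constructor
  · have := congrArg (fun p => Polynomial.coeff p 0) hz
    simpa using this
  · have := congrArg (fun p => Polynomial.coeff p 1) hz
    simpa using this

private lemma dec32 : ∀ a b : ZMod 32,
    (a^2-b^2)^2 - (2*a*b-b^2)^2 = 1 →
    2*(a^2-b^2)*(2*a*b-b^2) - (2*a*b-b^2)^2 = 0 →
    (∃ c, b = 8*c) ∧ ((∃ c, a - 1 = 8*c) ∨ (∃ c, a + 1 = 8*c)) := by decide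

private lemma dvd_lift (m : ℕ) (h32 : (32:ℕ) ∣ 2^m) (z : ZMod (2^m))
    (h : ∃ c, (ZMod.castHom h32 (ZMod 32) z) = 8 * c) :
    ∃ w : ZMod (2^m), z = 8 * w := by
  haveI : NeZero (2^m) := ⟨by positivity⟩
  obtain ⟨c, hc⟩ := h
  have hv : ((z.val : ℕ) : ZMod 32) = 8 * c := by
    rw [ZMod.natCast_val]
    rw [ZMod.castHom_apply] at hc
    exact hc
  have h8c : (8 * c : ZMod 32) = ((8 * c.val : ℕ) : ZMod 32) := by
    push_cast [ZMod.natCast_val, ZMod.cast_id]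
    ring
  have h1 : z.val % 32 = (8 * c.val) % 32 := by
    have h2 := congrArg ZMod.val (hv.trans h8c)
    rwa [ZMod.val_natCast, ZMod.val_natCast] at h2
  have h2 : (8:ℕ) ∣ z.val % 32 := ⟨c.val % 4, by omega⟩
  have h3 : (8:ℕ) ∣ z.val := (Nat.dvd_mod_iff (by norm_num)).mp h2
  obtain ⟨k, hk⟩ := h3
  refine ⟨(k : ZMod (2^m)), ?_⟩
  have hz : z = ((z.val : ℕ) : ZMod (2^m)) := by
    simp [ZMod.natCast_val, ZMod.cast_id]
  rw [hz, hk]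
  push_cast
  ring

private lemma main_bound (m : ℕ) (hm : 5 ≤ m) :
    Nat.card {x : AdjoinRoot (X^2+X+1 : (ZMod (2^m))[X]) // x^4 = 1} ≤ 32 := by
  haveI hfact : Fact (1 < 2^m) := ⟨by calc 1 < 32 := by norm_num
                                        _ = 2^5 := by norm_num
                                        _ ≤ 2^m := Nat.pow_le_pow_right (by norm_num) hm⟩
  haveI : NeZero (2^m) := ⟨by positivity⟩
  have h32 : (32:ℕ) ∣ 2^m := by
    have : (2:ℕ)^5 ∣ 2^m := pow_dvd_pow 2 hm
    simpa using this
  set f : (ZMod (2^m))[X] := X^2+X+1 with hf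
  set θ : AdjoinRoot f := AdjoinRoot.root f with hθdef
  set ofZ : ZMod (2^m) →+* AdjoinRoot f := AdjoinRoot.of f with hofZ
  have hθ : θ^2 + θ + 1 = 0 := by
    have h := AdjoinRoot.mk_self (f := f)
    calc θ^2 + θ + 1 = AdjoinRoot.mk f (X^2+X+1) := by
          rw [map_add, map_add, map_pow, AdjoinRoot.mk_X, map_one]
      _ = 0 := by rw [← hf]; exact h
  -- 2 is nilpotent in AdjoinRoot f
  have h2Z : (2 : ZMod (2^m))^m = 0 := by
    have := ZMod.natCast_self (2^m)
    push_cast at this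
    exact this
  have h2R : (2 : AdjoinRoot f)^m = 0 := by
    rw [← map_ofNat ofZ 2, ← map_pow, h2Z, map_zero]
  have hunit : ∀ w : AdjoinRoot f, IsUnit (1 + 2*w) := by
    intro w
    exact IsNilpotent.isUnit_one_add ⟨m, by rw [mul_pow, h2R, zero_mul]⟩
  have KEY : ∀ w : AdjoinRoot f, (1 + 8*w)^4 = 1 → 32*w = 0 := by
    intro w hw4
    obtain ⟨v, hv⟩ := hunit (6*w + 32*w^2 + 64*w^3)
    have h0 : 32*w*(1 + 2*(6*w + 32*w^2 + 64*w^3)) = 0 := by linear_combination hw4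
    calc 32*w = 32*w*((1 + 2*(6*w+32*w^2+64*w^3)) * ↑v⁻¹) := by
          rw [← hv, Units.mul_inv, mul_one]
      _ = (32*w*(1 + 2*(6*w+32*w^2+64*w^3))) * ↑v⁻¹ := by ring
      _ = 0 := by rw [h0, zero_mul]
  have MAIN : ∀ x : AdjoinRoot f, x^4 = 1 → ∃ (ε : Bool) (c0 c1 : ZMod (2^m)),
      4*c0 = 0 ∧ 4*c1 = 0 ∧ x = (if ε then 1 else -1) + (ofZ c0 + ofZ c1 * θ) := by
    intro x hx
    obtain ⟨a, b, hab⟩ := coords (2^m) x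
    rw [← hofZ, ← hθdef] at hab
    have hx2 : x^2 = ofZ (a^2-b^2) + ofZ (2*a*b-b^2) * θ := by
      rw [hab]
      simp only [map_sub, map_mul, map_pow, map_ofNat]
      linear_combination (ofZ b)^2 * hθ
    have hx4 : x^4 = ofZ ((a^2-b^2)^2-(2*a*b-b^2)^2)
        + ofZ (2*(a^2-b^2)*(2*a*b-b^2)-(2*a*b-b^2)^2) * θ := by
      rw [show x^4 = (x^2)^2 by ring, hx2]
      simp only [map_sub, map_mul, map_pow, map_ofNat]
      linear_combination (2*(ofZ a)*(ofZ b) - (ofZ b)^2)^2 * hθ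
    have hzero : ofZ ((a^2-b^2)^2-(2*a*b-b^2)^2 - 1)
        + ofZ (2*(a^2-b^2)*(2*a*b-b^2)-(2*a*b-b^2)^2) * θ = 0 := by
      rw [map_sub, map_one]
      rw [hx4] at hx
      linear_combination hx
    obtain ⟨hE0, hE1⟩ := coords_inj (2^m) _ _ hzero
    -- cast to ZMod 32
    set φ : ZMod (2^m) →+* ZMod 32 := ZMod.castHom h32 (ZMod 32) with hφ
    have e0 : ((φ a)^2-(φ b)^2)^2 - (2*(φ a)*(φ b)-(φ b)^2)^2 = 1 := by
      have h := congrArg φ hE0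
      simp only [map_sub, map_mul, map_pow, map_one, map_zero, map_ofNat] at h
      linear_combination h
    have e1 : 2*((φ a)^2-(φ b)^2)*(2*(φ a)*(φ b)-(φ b)^2) - (2*(φ a)*(φ b)-(φ b)^2)^2 = 0 := by
      have h := congrArg φ hE1
      simp only [map_sub, map_mul, map_pow, map_one, map_zero, map_ofNat] at h
      linear_combination h
    obtain ⟨hb8, ha8⟩ := dec32 (φ a) (φ b) e0 e1
    obtain ⟨b', hb'⟩ := dvd_lift m h32 b hb8
    rcases ha8 with hcase | hcase
    · -- a ≡ 1 mod 8
      obtain ⟨a', ha'⟩ := dvd_lift m h32 (a-1) (by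
        obtain ⟨c, hc⟩ := hcase
        exact ⟨c, by rw [map_sub, map_one]; exact hc⟩)
      have hw : x = 1 + 8 * (ofZ a' + ofZ b' * θ) := by
        rw [hab, show a = 1 + 8*a' by linear_combination ha', hb']
        simp only [map_add, map_mul, map_one, map_ofNat]
        ring
      have h32w : 32 * (ofZ a' + ofZ b' * θ) = 0 := by
        apply KEY
        rw [← hw]; exact hx
      have hcoord : ofZ (32*a') + ofZ (32*b') * θ = 0 := by
        simp only [map_mul, map_ofNat]
        linear_combination h32w
      obtain ⟨h1, h2⟩ := coords_inj (2^m) _ _ hcoord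
      refine ⟨true, a - 1, b, ?_, ?_, ?_⟩
      · rw [ha']; linear_combination h1
      · rw [hb']; linear_combination h2
      · simp only [if_pos]
        rw [hab, map_sub, map_one]
        ring
    · -- a ≡ -1 mod 8
      obtain ⟨a', ha'⟩ := dvd_lift m h32 (a+1) (by
        obtain ⟨c, hc⟩ := hcase
        exact ⟨c, by rw [map_add, map_one]; exact hc⟩)
      have hw : x = -1 + 8 * (ofZ a' + ofZ b' * θ) := by
        rw [hab, show a = -1 + 8*a' by linear_combination ha', hb']
        simp only [map_add, map_mul, map_one, map_ofNat, map_neg]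
        ring
      have h32w : 32 * (-(ofZ a' + ofZ b' * θ)) = 0 := by
        apply KEY
        have : (1 + 8 * -(ofZ a' + ofZ b' * θ)) = -x := by rw [hw]; ring
        rw [this]
        linear_combination hx
      have hcoord : ofZ (32*a') + ofZ (32*b') * θ = 0 := by
        simp only [map_mul, map_ofNat]
        linear_combination -h32w
      obtain ⟨h1, h2⟩ := coords_inj (2^m) _ _ hcoord
      refine ⟨false, a + 1, b, ?_, ?_, ?_⟩
      · rw [ha']; linear_combination h1
      · rw [hb']; linear_combination h2
      · simp only [if_neg Bool.false_ne_true]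
        rw [hab, map_add, map_one]
        ring
  -- cardinality of 4-torsion of ZMod (2^m)
  have hMcard : Nat.card {c : ZMod (2^m) // 4*c = 0} ≤ 4 := by
    have hpos : 0 < 2^(m-2) := by positivity
    have hsplit : (2:ℕ)^(m-2)*4 = 2^m := by
      rw [show (4:ℕ) = 2^2 by norm_num, ← pow_add]
      congr 1
      omega
    have hdvd : ∀ c : {c : ZMod (2^m) // 4*c = 0}, 2^(m-2) ∣ c.1.val := by
      intro c
      have h4 : ((4 * c.1.val : ℕ) : ZMod (2^m)) = 0 := by
        push_cast [ZMod.natCast_val, ZMod.cast_id]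
        exact c.2
      rw [ZMod.natCast_eq_zero_iff] at h4
      obtain ⟨k, hk⟩ := h4
      refine ⟨k, ?_⟩
      have h5 : 4*c.1.val = 4*(2^(m-2)*k) := by rw [hk, ← hsplit]; ring
      exact Nat.eq_of_mul_eq_mul_left (by norm_num) h5
    let g : {c : ZMod (2^m) // 4*c = 0} → Fin 4 := fun c =>
      ⟨c.1.val / 2^(m-2), by
        have hlt : c.1.val < 2^m := ZMod.val_lt c.1
        apply Nat.div_lt_of_lt_mul
        rw [hsplit]
        exact hlt⟩
    have hginj : Function.Injective g := by
      intro c c' hgc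
      have h1 : c.1.val = c'.1.val := by
        have e1 := Nat.div_mul_cancel (hdvd c)
        have e2 := Nat.div_mul_cancel (hdvd c')
        have h3 : c.1.val / 2^(m-2) = c'.1.val / 2^(m-2) := congrArg Fin.val hgc
        rw [← e1, ← e2, h3]
      exact Subtype.ext (ZMod.val_injective _ h1)
    calc Nat.card {c : ZMod (2^m) // 4*c = 0} ≤ Nat.card (Fin 4) :=
          Nat.card_le_card_of_injective g hginj
      _ = 4 := by simp
  -- final injection
  set M := {c : ZMod (2^m) // 4*c = 0} with hM
  have hex : ∀ x : {x : AdjoinRoot f // x^4 = 1}, ∃ d : Bool × M × M,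
      (x:AdjoinRoot f) = (if d.1 then 1 else -1) + (ofZ d.2.1.1 + ofZ d.2.2.1 * θ) := by
    intro ⟨x, hx⟩
    obtain ⟨ε, c0, c1, h0, h1, hxx⟩ := MAIN x hx
    exact ⟨⟨ε, ⟨c0, h0⟩, ⟨c1, h1⟩⟩, hxx⟩
  let F : {x : AdjoinRoot f // x^4 = 1} → Bool × M × M := fun x => (hex x).choose
  have hinj : Function.Injective F := by
    intro x y hxy
    apply Subtype.ext
    rw [(hex x).choose_spec, (hex y).choose_spec]
    exact congrArg (fun d : Bool × M × M =>
      (if d.1 then (1:AdjoinRoot f) else -1) + (ofZ d.2.1.1 + ofZ d.2.2.1 * θ)) hxy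
  calc Nat.card {x : AdjoinRoot f // x^4 = 1} ≤ Nat.card (Bool × M × M) :=
        Nat.card_le_card_of_injective F hinj
    _ = 2 * (Nat.card M * Nat.card M) := by simp [Nat.card_prod]
    _ ≤ 2 * (4 * 4) := by gcongr
    _ = 32 := by norm_num

theorem eisenstein_fourth_root_count (m : ℕ) (hm : 5 ≤ m) :
    Nat.card {x : EisensteinMod (2 ^ m) // x ^ 4 = 1} ≤ 32 := by
  exact main_bound m hm
end

section
/- For m ≥ 3, the unit group of Z_{2^m}[ω] is isomorphic to Z_3 × Z_{2^{m−1}} × Z_{2^{m−2}} × Z_2. -/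
open Polynomial

noncomputable section
namespace EisHelper

lemma three_pow (k : ℕ) : ∃ t : ℕ, Odd t ∧ 3^(2^(k+1)) = 1 + 2^(k+3)*t := by
  induction k with
  | zero => exact ⟨1, odd_one, by norm_num⟩
  | succ k ih =>
    obtain ⟨t, ht, h⟩ := ih
    refine ⟨t + 2^(k+2)*t^2, ?_, ?_⟩
    · rcases ht with ⟨s, rfl⟩; exact ⟨s + 2^(k+1)*(2*s+1)^2, by ring⟩
    · have h2 : 3^(2^(k+2)) = (3^(2^(k+1)))^2 := by rw [← pow_mul, pow_succ]
      rw [h2, h]; ring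

variable (m : ℕ)

abbrev Zm := ZMod (2^m)
abbrev fpoly : Polynomial (Zm m) := X^2 + X + 1
abbrev Rm := AdjoinRoot (fpoly m)

lemma two_pow_ne {k : ℕ} (hk : k < m) : ((2:Zm m))^k ≠ 0 := by
  have : ((2:Zm m))^k = ((2^k : ℕ) : Zm m) := by push_cast; ring
  rw [this, Ne, ZMod.natCast_eq_zero_iff]
  rw [Nat.pow_dvd_pow_iff_le_right Nat.one_lt_two]
  omega

lemma two_pow_m : ((2:Zm m))^m = 0 := by
  have : ((2:Zm m))^m = ((2^m : ℕ) : Zm m) := by push_cast; ring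
  rw [this, ZMod.natCast_self]

lemma fact_lt (hm : 1 ≤ m) : Fact (1 < 2^m) :=
  ⟨Nat.one_lt_two_pow_iff.mpr (by omega)⟩

lemma hmonic (hm : 1 ≤ m) : (fpoly m).Monic := by
  haveI := fact_lt m hm
  unfold fpoly
  rw [add_assoc]
  refine (monic_X_pow 2).add_of_left ?_
  have h1 : ((X + 1 : (Zm m)[X])).degree = 1 := by
    rw [← C_1]; exact degree_X_add_C 1
  rw [degree_X_pow, h1]
  decide

lemma hdeg (hm : 1 ≤ m) : (fpoly m).natDegree = 2 := by
  haveI := fact_lt m hm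
  unfold fpoly; compute_degree!

abbrev ω : Rm m := AdjoinRoot.root (fpoly m)

lemma hω : (ω m)^2 + ω m + 1 = 0 := by
  have h : AdjoinRoot.mk (fpoly m) (fpoly m) = 0 := AdjoinRoot.mk_self
  simpa only [map_add, map_pow, map_one, AdjoinRoot.mk_X] using h

def bb (hm : 1 ≤ m) : Module.Basis (Fin 2) (Zm m) (Rm m) :=
  (AdjoinRoot.powerBasis' (hmonic m hm)).basis.reindex (finCongr (hdeg m hm))

def ψ (hm : 1 ≤ m) : Zm m × Zm m ≃ Rm m :=
  ((piFinTwoEquiv fun _ => Zm m).symm.trans (bb m hm).equivFun.symm.toEquiv)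

lemma psi_apply (hm : 1 ≤ m) (a c : Zm m) :
    ψ m hm (a, c) = AdjoinRoot.of (fpoly m) a + AdjoinRoot.of (fpoly m) c * ω m := by
  show (bb m hm).equivFun.symm ((piFinTwoEquiv fun _ => Zm m).symm (a, c)) = _
  rw [Module.Basis.equivFun_symm_apply, Fin.sum_univ_two]
  have h0 : bb m hm 0 = 1 := by
    rw [bb, Module.Basis.reindex_apply, PowerBasis.basis_eq_pow]
    simp [finCongr]
  have h1 : bb m hm 1 = ω m := by
    rw [bb, Module.Basis.reindex_apply, PowerBasis.basis_eq_pow]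
    simp [finCongr]
  simp [h0, h1, Algebra.smul_def, AdjoinRoot.algebraMap_eq]

lemma normal_inj (hm : 1 ≤ m) {a c a' c' : Zm m}
    (h : AdjoinRoot.of (fpoly m) a + AdjoinRoot.of (fpoly m) c * ω m
       = AdjoinRoot.of (fpoly m) a' + AdjoinRoot.of (fpoly m) c' * ω m) :
    a = a' ∧ c = c' := by
  have := (ψ m hm).injective (a₁ := (a,c)) (a₂ := (a',c')) (by rw [psi_apply, psi_apply]; exact h)
  exact ⟨congrArg Prod.fst this, congrArg Prod.snd this⟩

lemma of_inj (hm : 1 ≤ m) : Function.Injective (AdjoinRoot.of (fpoly m)) := by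
  intro a b h
  have : AdjoinRoot.of (fpoly m) a + AdjoinRoot.of (fpoly m) 0 * ω m
       = AdjoinRoot.of (fpoly m) b + AdjoinRoot.of (fpoly m) 0 * ω m := by
    simpa using h
  exact (normal_inj m hm this).1

variable (hm : 3 ≤ m)
include hm

lemma L1 : (-3 : Zm m)^(2^(m-3)) = 1 + 2^(m-1) := by
  rcases Nat.lt_or_ge m 4 with h4 | h4
  · have : m = 3 := by omega
    subst this
    decide
  · obtain ⟨k, rfl⟩ : ∃ k, m = k+4 := ⟨m-4, by omega⟩
    have he : k+4-3 = k+1 := by omega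
    have he2 : k+4-1 = k+3 := by omega
    rw [he, he2]
    have heven : Even (2^(k+1)) := (Nat.even_pow).mpr ⟨even_two, by omega⟩
    rw [heven.neg_pow]
    obtain ⟨t, ⟨s, rfl⟩, h⟩ := three_pow k
    have : (3 : Zm (k+4))^(2^(k+1)) = ((3^(2^(k+1)) : ℕ) : Zm (k+4)) := by push_cast; ring
    rw [this, h]
    push_cast
    have hz : ((2:Zm (k+4)))^(k+4) = 0 := two_pow_m (k+4)
    linear_combination (s:Zm (k+4)) * hz

lemma L2 : (-3 : Zm m)^(2^(m-2)) = 1 := by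
  have h1 : 2^(m-2) = 2^(m-3)*2 := by
    rw [← pow_succ]; congr 1; omega
  rw [h1, pow_mul, L1 m hm]
  have hz : ((2:Zm m))^m = 0 := two_pow_m m
  have e1 : ((2:Zm m))^(m-1)*2^(m-1) = 2^m * 2^(m-2) := by
    rw [← pow_add, ← pow_add]; congr 1; omega
  have e2 : (2:Zm m)*2^(m-1) = 2^m := by rw [← pow_succ']; congr 1; omega
  linear_combination e1 + e2 + ((2:Zm m)^(m-2)+1)*hz

lemma L3 : (1 : Zm m) + 2^(m-1) ≠ 1 := by
  intro h
  exact two_pow_ne m (show m-1 < m by omega) (by linear_combination h)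

lemma L5 : (1 : Zm m) + 2^(m-1) ≠ -1 := by
  intro h
  have h2 : ((2^(m-1) + 2 : ℕ) : Zm m) = 0 := by push_cast; linear_combination h
  rw [ZMod.natCast_eq_zero_iff] at h2
  have hlt : 2^(m-1) + 2 < 2^m := by
    have h1 : 2^(m-1) + 2^(m-1) = 2^m := by rw [← two_mul, ← pow_succ']; congr 1; omega
    have : (2:ℕ) < 2^(m-1) := by
      calc (2:ℕ) < 2^2 := by norm_num
      _ ≤ 2^(m-1) := Nat.pow_le_pow_right (by norm_num) (by omega)
    omega
  exact absurd (Nat.le_of_dvd (by positivity) h2) (by omega)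

lemma ord3 : orderOf (-3 : Zm m) = 2^(m-2) := by
  have h1 : m - 2 = (m-3) + 1 := by omega
  rw [h1]
  refine orderOf_eq_prime_pow ?_ ?_
  · rw [L1 m hm]; exact L3 m hm
  · rw [← h1]; exact L2 m hm


lemma of_neg3 : AdjoinRoot.of (fpoly m) (-3) = -3 := by rw [map_neg, map_ofNat]

lemma of_two_pow (k : ℕ) : AdjoinRoot.of (fpoly m) (2^k) = 2^k := by
  rw [map_pow, map_ofNat]

omit hm

lemma hu_sq : (1 + 2*ω m)^2 = -3 := by linear_combination (4:Rm m)*hω m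

include hm

lemma hu_powm2 : (1 + 2*ω m)^(2^(m-2)) = AdjoinRoot.of (fpoly m) (1+2^(m-1)) := by
  have h1 : 2^(m-2) = 2*2^(m-3) := by rw [← pow_succ']; congr 1; omega
  rw [h1, pow_mul, hu_sq m, ← of_neg3 m hm, ← map_pow, L1 m hm]

lemma hu_powm1 : (1 + 2*ω m)^(2^(m-1)) = 1 := by
  have h1 : 2^(m-1) = 2*2^(m-2) := by rw [← pow_succ']; congr 1; omega
  rw [h1, pow_mul, hu_sq m, ← of_neg3 m hm, ← map_pow, L2 m hm, map_one]

lemma hu_ne : (1 + 2*ω m)^(2^(m-2)) ≠ 1 := by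
  rw [hu_powm2 m hm]
  intro h
  rw [← map_one (AdjoinRoot.of (fpoly m))] at h
  exact L3 m hm (of_inj m (by omega) h)

lemma ord_u : orderOf (1 + 2*ω m) = 2^(m-1) := by
  have h1 : m - 1 = (m-2) + 1 := by omega
  rw [h1]
  refine orderOf_eq_prime_pow (hu_ne m hm) ?_
  rw [← h1]; exact hu_powm1 m hm

omit hm

lemma hv_ind (k : ℕ) : ∃ r : Rm m, (1+4*ω m)^(2^k) = 1 + 2^(k+2)*ω m + 2^(k+3)*r := by
  induction k with
  | zero => exact ⟨0, by norm_num⟩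
  | succ k ih =>
    obtain ⟨r, h⟩ := ih
    refine ⟨r + 2^k*(ω m+2*r)^2, ?_⟩
    have hsq : (1+4*ω m)^(2^(k+1)) = ((1+4*ω m)^(2^k))^2 := by rw [← pow_mul, pow_succ]
    rw [hsq, h]
    ring

include hm

lemma two_pow_m_R : (2:Rm m)^m = 0 := by
  have : (2:Rm m)^m = AdjoinRoot.of (fpoly m) ((2:Zm m)^m) := by rw [map_pow, map_ofNat]
  rw [this, two_pow_m, map_zero]

lemma hv3 : (1+4*ω m)^(2^(m-3)) = 1 + 2^(m-1)*ω m := by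
  obtain ⟨r, h⟩ := hv_ind m (m-3)
  have e1 : (m-3)+2 = m-1 := by omega
  have e2 : (m-3)+3 = m := by omega
  rw [e1, e2, two_pow_m_R m hm, zero_mul, add_zero] at h
  exact h

lemma hv2 : (1+4*ω m)^(2^(m-2)) = 1 := by
  have h1 : 2^(m-2) = 2^(m-3)*2 := by rw [← pow_succ]; congr 1; omega
  rw [h1, pow_mul, hv3 m hm]
  have hz : (2:Rm m)^m = 0 := two_pow_m_R m hm
  have e1 : ((2:Rm m))^(m-1)*2^(m-1) = 2^m * 2^(m-2) := by
    rw [← pow_add, ← pow_add]; congr 1; omega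
  have e2 : (2:Rm m)*2^(m-1) = 2^m := by rw [← pow_succ']; congr 1; omega
  linear_combination (ω m)*e2 + (ω m)^2*e1 + (ω m + 2^(m-2)*(ω m)^2)*hz

lemma t_ne_one : 1 + (2:Rm m)^(m-1)*ω m ≠ 1 := by
  intro h
  have hn : AdjoinRoot.of (fpoly m) 1 + AdjoinRoot.of (fpoly m) ((2:Zm m)^(m-1)) * ω m
      = AdjoinRoot.of (fpoly m) 1 + AdjoinRoot.of (fpoly m) 0 * ω m := by
    rw [map_one, map_zero, zero_mul, add_zero, map_pow, map_ofNat]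
    exact h
  exact two_pow_ne m (show m-1 < m by omega) (normal_inj m (by omega) hn).2

lemma hv_ne : (1+4*ω m)^(2^(m-3)) ≠ 1 := by
  rw [hv3 m hm]; exact t_ne_one m hm

lemma ord_v : orderOf (1 + 4*ω m) = 2^(m-2) := by
  have h1 : m - 2 = (m-3) + 1 := by omega
  rw [h1]
  refine orderOf_eq_prime_pow (hv_ne m hm) ?_
  rw [← h1]; exact hv2 m hm

omit hm
lemma homega3 : (ω m)^3 = 1 := by linear_combination (ω m - 1)*hω m
include hm

lemma homega_ne : ω m ≠ 1 := by
  intro h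
  have hn : AdjoinRoot.of (fpoly m) 0 + AdjoinRoot.of (fpoly m) 1 * ω m
      = AdjoinRoot.of (fpoly m) 1 + AdjoinRoot.of (fpoly m) 0 * ω m := by
    rw [map_one, map_zero]; simpa using h
  haveI := fact_lt m (by omega)
  haveI : Nontrivial (Zm m) := ZMod.nontrivial _
  exact one_ne_zero ((normal_inj m (by omega) hn).1).symm

lemma ord_omega : orderOf (ω m) = 3 := by
  haveI : Fact (Nat.Prime 3) := ⟨Nat.prime_three⟩
  exact orderOf_eq_prime (homega3 m) (homega_ne m hm)

lemma neg_one_ne : (-1 : Rm m) ≠ 1 := by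
  intro h
  have hn : AdjoinRoot.of (fpoly m) (-1) + AdjoinRoot.of (fpoly m) 0 * ω m
      = AdjoinRoot.of (fpoly m) 1 + AdjoinRoot.of (fpoly m) 0 * ω m := by
    rw [map_one, map_neg, map_one, map_zero]; simpa using h
  have h2 : (-1 : Zm m) = 1 := (normal_inj m (by omega) hn).1
  have h3 : (2:Zm m)^1 = 0 := by rw [pow_one]; linear_combination -h2
  exact two_pow_ne m (by omega) h3

lemma ord_neg_one : orderOf (-1 : Rm m) = 2 := by
  haveI : Fact (Nat.Prime 2) := ⟨Nat.prime_two⟩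
  exact orderOf_eq_prime (by rw [neg_one_sq]) (neg_one_ne m hm)


end EisHelper

namespace EisHelper

variable (m : ℕ)

abbrev π (hm1 : 1 ≤ m) : Zm m →+* ZMod 2 := ZMod.castHom (dvd_pow_self 2 (by omega)) (ZMod 2)

lemma pi_natCast (hm1 : 1 ≤ m) (z : Zm m) : π m hm1 z = ((z.val : ℕ) : ZMod 2) := by
  haveI : NeZero (2^m) := ⟨by positivity⟩
  rw [ZMod.castHom_apply, ZMod.natCast_val]

lemma pi_zero_iff (hm1 : 1 ≤ m) (z : Zm m) : π m hm1 z = 0 ↔ 2 ∣ z.val := by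
  rw [pi_natCast m hm1, ZMod.natCast_eq_zero_iff]

lemma isUnit_of_pi_ne (hm1 : 1 ≤ m) (z : Zm m) (h : ¬ π m hm1 z = 0) : IsUnit z := by
  haveI : NeZero (2^m) := ⟨by positivity⟩
  rw [pi_zero_iff] at h
  have h2 : z = ((z.val : ℕ) : Zm m) := (ZMod.natCast_zmod_val z).symm
  rw [h2]
  rw [ZMod.isUnit_iff_coprime]
  exact Nat.Coprime.pow_right _ ((Nat.Prime.coprime_iff_not_dvd Nat.prime_two).mpr h).symm

lemma even_of_pi_zero (hm1 : 1 ≤ m) (z : Zm m) (h : π m hm1 z = 0) : ∃ w : Zm m, z = 2*w := by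
  haveI : NeZero (2^m) := ⟨by positivity⟩
  rw [pi_zero_iff] at h
  obtain ⟨t, ht⟩ := h
  refine ⟨(t : ℕ), ?_⟩
  have h2 : z = ((z.val : ℕ) : Zm m) := (ZMod.natCast_zmod_val z).symm
  rw [h2, ht]; push_cast; ring

lemma norm_identity (a c : Zm m) :
    (AdjoinRoot.of (fpoly m) a + AdjoinRoot.of (fpoly m) c * ω m)
      * (AdjoinRoot.of (fpoly m) (a-c) - AdjoinRoot.of (fpoly m) c * ω m)
    = AdjoinRoot.of (fpoly m) (a^2 - a*c + c^2) := by
  simp only [map_sub, map_add, map_mul, map_pow]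
  linear_combination (-(AdjoinRoot.of (fpoly m) c)^2) * hω m

lemma nontrivial_R (hm1 : 1 ≤ m) : (0 : Rm m) ≠ 1 := by
  haveI := fact_lt m hm1
  haveI : Nontrivial (Zm m) := ZMod.nontrivial _
  intro h
  rw [← map_zero (AdjoinRoot.of (fpoly m)), ← map_one (AdjoinRoot.of (fpoly m))] at h
  exact zero_ne_one (of_inj m hm1 h)

lemma unit_criterion (hm1 : 1 ≤ m) (a c : Zm m) :
    IsUnit (ψ m hm1 (a, c)) ↔ ¬(π m hm1 a = 0 ∧ π m hm1 c = 0) := by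
  rw [psi_apply]
  constructor
  · rintro hu ⟨ha, hc⟩
    obtain ⟨a', rfl⟩ := even_of_pi_zero m hm1 a ha
    obtain ⟨c', rfl⟩ := even_of_pi_zero m hm1 c hc
    have h2 : AdjoinRoot.of (fpoly m) (2*a') + AdjoinRoot.of (fpoly m) (2*c') * ω m
        = 2 * (AdjoinRoot.of (fpoly m) a' + AdjoinRoot.of (fpoly m) c' * ω m) := by
      rw [map_mul, map_mul, map_ofNat]; ring
    rw [h2] at hu
    have h3 : IsUnit (2 : Rm m) := isUnit_of_mul_isUnit_left hu
    have h4 : IsUnit ((2:Rm m)^m) := h3.pow m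
    have hz : ((2:Rm m))^m = 0 := by
      rw [show ((2:Rm m))^m = AdjoinRoot.of (fpoly m) ((2:Zm m)^m) by rw [map_pow, map_ofNat],
        two_pow_m, map_zero]
    rw [hz] at h4
    exact nontrivial_R m hm1 (isUnit_zero_iff.mp h4)
  · intro h
    have key : ∀ x y : ZMod 2, ¬(x = 0 ∧ y = 0) → x^2 - x*y + y^2 = 1 := by decide
    have hN : π m hm1 (a^2 - a*c + c^2) = 1 := by
      rw [map_add, map_sub, map_pow, map_mul, map_pow]
      exact key _ _ h
    have hNu : IsUnit (a^2 - a*c + c^2) := by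
      apply isUnit_of_pi_ne m hm1
      rw [hN]; exact one_ne_zero
    have := (hNu.map (AdjoinRoot.of (fpoly m)))
    rw [← norm_identity m] at this
    exact isUnit_of_mul_isUnit_left this

lemma card_evens (hm1 : 1 ≤ m) : Nat.card {z : Zm m // π m hm1 z = 0} = 2^(m-1) := by
  haveI : NeZero (2^m) := ⟨by positivity⟩
  set f : Zm m →+ ZMod 2 := AddMonoidHom.mk' (π m hm1) (map_add _) with hf
  have hsurj : Function.Surjective f := by
    intro y
    have hy : y = 0 ∨ y = 1 := (show ∀ z : ZMod 2, z = 0 ∨ z = 1 by decide) y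
    rcases hy with rfl | rfl
    · exact ⟨0, map_zero _⟩
    · exact ⟨1, map_one (π m hm1)⟩
  have h1 : Nat.card (Zm m) = Nat.card (Zm m ⧸ f.ker) * Nat.card f.ker :=
    AddSubgroup.card_eq_card_quotient_mul_card_addSubgroup _
  have h2 : Nat.card (Zm m ⧸ f.ker) = 2 := by
    rw [Nat.card_congr (QuotientAddGroup.quotientKerEquivOfSurjective f hsurj).toEquiv]
    exact Nat.card_zmod 2
  have h3 : Nat.card (Zm m) = 2^m := Nat.card_zmod _
  have e : {z : Zm m // π m hm1 z = 0} ≃ f.ker :=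
    Equiv.subtypeEquivRight (fun z => by
      rw [AddMonoidHom.mem_ker]
      exact Iff.rfl)
  rw [Nat.card_congr e]
  have h4 : 2^m = 2*2^(m-1) := by rw [← pow_succ']; congr 1; omega
  rw [h2, h3] at h1
  generalize hc : Nat.card f.ker = c at h1 ⊢
  rw [h4] at h1
  exact Nat.eq_of_mul_eq_mul_left (by norm_num) h1.symm

lemma card_units_R (hm1 : 1 ≤ m) :
    Nat.card (Rm m)ˣ = 2^m*2^m - 2^(m-1)*2^(m-1) := by
  haveI : NeZero (2^m) := ⟨by positivity⟩
  haveI : Finite (Rm m) := Finite.of_equiv _ (ψ m hm1)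
  classical
  have e1 : (Rm m)ˣ ≃ {x : Rm m // IsUnit x} :=
    { toFun := fun u => ⟨u, u.isUnit⟩
      invFun := fun x => x.2.unit
      left_inv := fun u => Units.ext u.isUnit.unit_spec
      right_inv := fun x => Subtype.ext x.2.unit_spec }
  have e2 : {x : Rm m // IsUnit x} ≃ {p : Zm m × Zm m // IsUnit (ψ m hm1 p)} :=
    (Equiv.subtypeEquiv (ψ m hm1) (fun p => Iff.rfl)).symm
  have e3 : {p : Zm m × Zm m // IsUnit (ψ m hm1 p)}
      ≃ {p : Zm m × Zm m // ¬ (π m hm1 p.1 = 0 ∧ π m hm1 p.2 = 0)} :=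
    Equiv.subtypeEquivRight (fun p => by
      obtain ⟨a, c⟩ := p
      exact unit_criterion m hm1 a c)
  have hcard1 : Nat.card (Rm m)ˣ
      = Nat.card {p : Zm m × Zm m // ¬ (π m hm1 p.1 = 0 ∧ π m hm1 p.2 = 0)} :=
    Nat.card_congr ((e1.trans e2).trans e3)
  have hsum : Nat.card {p : Zm m × Zm m // π m hm1 p.1 = 0 ∧ π m hm1 p.2 = 0}
      + Nat.card {p : Zm m × Zm m // ¬ (π m hm1 p.1 = 0 ∧ π m hm1 p.2 = 0)}
      = Nat.card (Zm m × Zm m) := by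
    rw [← Nat.card_sum]
    exact Nat.card_congr (Equiv.sumCompl _)
  have hPcard : Nat.card {p : Zm m × Zm m // π m hm1 p.1 = 0 ∧ π m hm1 p.2 = 0}
      = 2^(m-1)*2^(m-1) := by
    refine Eq.trans (Nat.card_congr (Equiv.subtypeProdEquivProd
      (p := fun a : Zm m => π m hm1 a = 0) (q := fun c : Zm m => π m hm1 c = 0))) ?_
    rw [Nat.card_prod, card_evens m hm1]
  have htot : Nat.card (Zm m × Zm m) = 2^m*2^m := by
    rw [Nat.card_prod, Nat.card_zmod]
  rw [htot, hPcard] at hsum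
  rw [hcard1]
  exact Nat.eq_sub_of_add_eq' hsum

lemma card_arith (hm : 3 ≤ m) :
    2^m*2^m - 2^(m-1)*2^(m-1) = 3*(2^(m-1)*(2^(m-2)*2)) := by
  have h1 : 2^(m-1) = 2*2^(m-2) := by rw [← pow_succ']; congr 1; omega
  have h2 : 2^m = 2*(2*2^(m-2)) := by
    rw [← h1, ← pow_succ']; congr 1; omega
  apply Nat.sub_eq_of_eq_add
  rw [h1, h2]
  ring

lemma pow_mod_helper {G : Type*} [Monoid G] {n : ℕ} (g : G) (h : g^n = 1) (x : ℕ) :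
    g^(x % n) = g^x := by
  conv_rhs => rw [← Nat.div_add_mod x n, pow_add, pow_mul, h, one_pow, one_mul]

def ζu : (Rm m)ˣ := (IsUnit.of_pow_eq_one (homega3 m) three_ne_zero).unit

def uu (hm : 3 ≤ m) : (Rm m)ˣ := (IsUnit.of_pow_eq_one (hu_powm1 m hm) (by positivity)).unit

def vu (hm : 3 ≤ m) : (Rm m)ˣ := (IsUnit.of_pow_eq_one (hv2 m hm) (by positivity)).unit

lemma zeta_val : ((ζu m : (Rm m)ˣ) : Rm m) = ω m := IsUnit.unit_spec _

lemma uu_val (hm : 3 ≤ m) : ((uu m hm : (Rm m)ˣ) : Rm m) = 1 + 2*ω m := IsUnit.unit_spec _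

lemma vu_val (hm : 3 ≤ m) : ((vu m hm : (Rm m)ˣ) : Rm m) = 1 + 4*ω m := IsUnit.unit_spec _

lemma zeta3 : (ζu m)^3 = 1 :=
  Units.ext (by rw [Units.val_pow_eq_pow_val, zeta_val, homega3, Units.val_one])

lemma uu_pow (hm : 3 ≤ m) : (uu m hm)^(2^(m-1)) = 1 :=
  Units.ext (by rw [Units.val_pow_eq_pow_val, uu_val, hu_powm1 m hm, Units.val_one])

lemma vu_pow (hm : 3 ≤ m) : (vu m hm)^(2^(m-2)) = 1 :=
  Units.ext (by rw [Units.val_pow_eq_pow_val, vu_val, hv2 m hm, Units.val_one])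

lemma eps2 : ((-1 : (Rm m)ˣ))^2 = 1 := by rw [neg_one_sq]

lemma ord_zeta (hm : 3 ≤ m) : orderOf (ζu m) = 3 := by
  rw [← orderOf_units, zeta_val]; exact ord_omega m hm

lemma ord_uu (hm : 3 ≤ m) : orderOf (uu m hm) = 2^(m-1) := by
  rw [← orderOf_units, uu_val]; exact ord_u m hm

lemma ord_vu (hm : 3 ≤ m) : orderOf (vu m hm) = 2^(m-2) := by
  rw [← orderOf_units, vu_val]; exact ord_v m hm

lemma ord_eps (hm : 3 ≤ m) : orderOf ((-1 : (Rm m)ˣ)) = 2 := by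
  rw [← orderOf_units]
  simpa using ord_neg_one m hm

def cu : (Zm m)ˣ →* (Rm m)ˣ := Units.map (AdjoinRoot.of (fpoly m)).toMonoidHom

def νu (hm : 3 ≤ m) : (Zm m)ˣ := (IsUnit.of_pow_eq_one (L2 m hm) (by positivity)).unit

lemma nu_val (hm : 3 ≤ m) : ((νu m hm : (Zm m)ˣ) : Zm m) = -3 := IsUnit.unit_spec _

lemma uu_sq_eq (hm : 3 ≤ m) : (uu m hm)^2 = cu m (νu m hm) :=
  Units.ext (by
    rw [Units.val_pow_eq_pow_val, uu_val m hm, hu_sq m, cu, Units.coe_map,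
      RingHom.toMonoidHom_eq_coe, MonoidHom.coe_coe, nu_val m hm, of_neg3 m hm])

lemma eps_eq : (-1 : (Rm m)ˣ) = cu m (-1) :=
  Units.ext (by
    rw [cu, Units.coe_map, RingHom.toMonoidHom_eq_coe, MonoidHom.coe_coe]
    simp)

lemma cu_inj (hm1 : 1 ≤ m) : Function.Injective (cu m) :=
  Units.map_injective (f := (AdjoinRoot.of (fpoly m)).toMonoidHom) (of_inj m hm1)

lemma vu_two (hm : 3 ≤ m) (a : ℕ) (h1 : (vu m hm)^a ≠ 1) (h2 : ((vu m hm)^a)^2 = 1) :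
    (vu m hm)^a = (vu m hm)^(2^(m-3)) := by
  have he : (2:ℕ)^(m-2) = 2^(m-3)*2 := by rw [← pow_succ]; congr 1; omega
  have hdvd : 2^(m-2) ∣ a*2 := by
    rw [← ord_vu m hm]
    rw [← pow_mul] at h2
    exact orderOf_dvd_of_pow_eq_one h2
  have h3 : 2^(m-3) ∣ a := by
    rw [he] at hdvd
    exact (Nat.mul_dvd_mul_iff_right (by norm_num : 0 < 2)).mp hdvd
  obtain ⟨b, rfl⟩ := h3
  have ht2 : ((vu m hm)^(2^(m-3)))^2 = 1 := by
    rw [← pow_mul, ← he]; exact vu_pow m hm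
  rcases Nat.even_or_odd b with ⟨c, rfl⟩ | ⟨c, rfl⟩
  · exfalso
    apply h1
    rw [pow_mul, ← two_mul, pow_mul, ht2, one_pow]
  · rw [pow_mul, pow_succ, pow_mul, ht2, one_pow, one_mul]

def φ (hm : 3 ≤ m) :
    Multiplicative (ZMod 3 × ZMod (2^(m-1)) × ZMod (2^(m-2)) × ZMod 2) →* (Rm m)ˣ where
  toFun x :=
    ζu m ^ (Multiplicative.toAdd x).1.val
    * uu m hm ^ (Multiplicative.toAdd x).2.1.val
    * vu m hm ^ (Multiplicative.toAdd x).2.2.1.val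
    * (-1 : (Rm m)ˣ) ^ (Multiplicative.toAdd x).2.2.2.val
  map_one' := by
    simp only [toAdd_one, Prod.fst_zero, Prod.snd_zero, ZMod.val_zero, pow_zero, mul_one]
  map_mul' x y := by
    haveI : NeZero ((2:ℕ)^(m-1)) := ⟨by positivity⟩
    haveI : NeZero ((2:ℕ)^(m-2)) := ⟨by positivity⟩
    simp only [toAdd_mul, Prod.fst_add, Prod.snd_add]
    rw [ZMod.val_add, ZMod.val_add, ZMod.val_add, ZMod.val_add,
      pow_mod_helper _ (zeta3 m), pow_mod_helper _ (uu_pow m hm),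
      pow_mod_helper _ (vu_pow m hm), pow_mod_helper _ (eps2 m),
      pow_add, pow_add, pow_add, pow_add]
    ac_rfl

lemma phi_inj (hm : 3 ≤ m) : Function.Injective (φ m hm) := by
  haveI : NeZero ((2:ℕ)^(m-1)) := ⟨by positivity⟩
  haveI : NeZero ((2:ℕ)^(m-2)) := ⟨by positivity⟩
  rw [injective_iff_map_eq_one]
  intro x hx
  set i := (Multiplicative.toAdd x).1 with hi
  set j := (Multiplicative.toAdd x).2.1 with hj
  set k := (Multiplicative.toAdd x).2.2.1 with hk
  set l := (Multiplicative.toAdd x).2.2.2 with hl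
  have hx1 : ζu m ^ i.val * uu m hm ^ j.val * vu m hm ^ k.val
      * (-1:(Rm m)ˣ) ^ l.val = 1 := hx
  have hpow1 : (2:ℕ)^(m-1) = 2^(m-2)*2 := by rw [← pow_succ]; congr 1; omega
  have hpow1' : (2:ℕ)^(m-1) = 2*2^(m-2) := by rw [← pow_succ']; congr 1; omega
  have hpow2 : (2:ℕ)^(m-2) = 2^(m-3)*2 := by rw [← pow_succ]; congr 1; omega
  have hpow2' : (2:ℕ)^(m-2) = 2*2^(m-3) := by rw [← pow_succ']; congr 1; omega
  -- Step 1 : i = 0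
  have hstep1 : i.val = 0 := by
    have h0 := congrArg (fun z => z^(2^(m-1))) hx1
    simp only [one_pow, mul_pow] at h0
    have e2 : (uu m hm ^ j.val)^(2^(m-1)) = 1 := by
      rw [pow_right_comm, uu_pow m hm, one_pow]
    have e3 : (vu m hm ^ k.val)^(2^(m-1)) = 1 := by
      rw [hpow1, pow_mul, pow_right_comm (vu m hm) k.val (2^(m-2)), vu_pow m hm]
      simp
    have e4 : ((-1:(Rm m)ˣ) ^ l.val)^(2^(m-1)) = 1 := by
      rw [hpow1', pow_mul, pow_right_comm (-1:(Rm m)ˣ) l.val 2, eps2 m]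
      simp
    rw [e2, e3, e4, mul_one, mul_one, mul_one, ← pow_mul] at h0
    have hdvd : 3 ∣ i.val*2^(m-1) := by
      have hdd := orderOf_dvd_of_pow_eq_one h0
      rwa [ord_zeta m hm] at hdd
    have hcop : Nat.Coprime 3 (2^(m-1)) := Nat.Coprime.pow_right _ (by norm_num)
    have h3i := hcop.dvd_of_dvd_mul_right hdvd
    have hlt : i.val < 3 := ZMod.val_lt i
    rcases Nat.eq_zero_or_pos i.val with h | h
    · exact h
    · exact absurd (Nat.le_of_dvd h h3i) (by omega)
  rw [hstep1, pow_zero, one_mul] at hx1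
  -- Step 2 : 2 ∣ j.val
  have hstep2 : 2 ∣ j.val := by
    have h0 := congrArg (fun z => z^(2^(m-2))) hx1
    simp only [one_pow, mul_pow] at h0
    have e3 : (vu m hm ^ k.val)^(2^(m-2)) = 1 := by
      rw [pow_right_comm, vu_pow m hm, one_pow]
    have e4 : ((-1:(Rm m)ˣ) ^ l.val)^(2^(m-2)) = 1 := by
      rw [hpow2', pow_mul, pow_right_comm (-1:(Rm m)ˣ) l.val 2, eps2 m]
      simp
    rw [e3, e4, mul_one, mul_one, ← pow_mul] at h0
    have hdvd : 2^(m-1) ∣ j.val*2^(m-2) := by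
      have hdd := orderOf_dvd_of_pow_eq_one h0
      rwa [ord_uu m hm] at hdd
    have hdvd' : 2^(m-2)*2 ∣ 2^(m-2)*j.val := by
      rw [← hpow1, mul_comm ((2:ℕ)^(m-2)) j.val]
      exact hdvd
    exact (Nat.mul_dvd_mul_iff_left (show 0 < (2:ℕ)^(m-2) by positivity)).mp hdvd'
  obtain ⟨j0, hj0⟩ := hstep2
  -- Step 3 : move into the image of cu
  have huj : uu m hm ^ j.val = cu m ((νu m hm)^j0) := by
    rw [hj0, pow_mul, uu_sq_eq m hm, ← map_pow]
  have hεl : (-1:(Rm m)ˣ)^l.val = cu m ((-1)^l.val) := by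
    rw [eps_eq m, ← map_pow]
  rw [huj, hεl] at hx1
  have hb : vu m hm ^ k.val * cu m ((νu m hm)^j0 * (-1)^l.val) = 1 := by
    rw [map_mul, ← hx1]
    ac_rfl
  have hvk : vu m hm ^ k.val = cu m ((((νu m hm)^j0 * (-1)^l.val))⁻¹) := by
    rw [map_inv]
    exact eq_inv_of_mul_eq_one_left hb
  -- Step 4 : k.val = 0
  have hk0 : k.val = 0 := by
    by_contra hkne
    have hwne : vu m hm ^ k.val ≠ 1 := by
      intro h
      have hd := orderOf_dvd_of_pow_eq_one h
      rw [ord_vu m hm] at hd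
      exact hkne (Nat.eq_zero_of_dvd_of_lt hd (ZMod.val_lt k))
    have hw2 : (vu m hm ^ k.val)^(2^(m-2)) = 1 := by
      rw [← pow_mul, mul_comm, pow_mul, vu_pow m hm, one_pow]
    have ho := orderOf_dvd_of_pow_eq_one hw2
    obtain ⟨c, hcle, hoc⟩ := (Nat.dvd_prime_pow Nat.prime_two).mp ho
    have hc0 : c ≠ 0 := by
      intro h
      subst h
      rw [pow_zero] at hoc
      exact hwne (orderOf_eq_one_iff.mp hoc)
    have hwa : vu m hm ^ (k.val*2^(c-1)) = (vu m hm ^ k.val)^(2^(c-1)) := pow_mul _ _ _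
    have hw'ne : vu m hm ^ (k.val*2^(c-1)) ≠ 1 := by
      rw [hwa]
      intro h
      have hd := orderOf_dvd_of_pow_eq_one h
      rw [hoc] at hd
      exact absurd ((Nat.pow_dvd_pow_iff_le_right Nat.one_lt_two).mp hd) (by omega)
    have hw'2 : (vu m hm ^ (k.val*2^(c-1)))^2 = 1 := by
      rw [hwa, ← pow_mul, ← pow_succ, show c-1+1 = c from by omega, ← hoc, pow_orderOf_eq_one]
    have heq := vu_two m hm (k.val*2^(c-1)) hw'ne hw'2
    have hL : vu m hm ^(k.val*2^(c-1))
        = cu m (((((νu m hm)^j0 * (-1)^l.val))⁻¹)^(2^(c-1))) := by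
      rw [pow_mul, hvk, ← map_pow]
    rw [hL] at heq
    -- compare values
    have hval := congrArg (fun u : (Rm m)ˣ => (u : Rm m)) heq
    simp only [cu, Units.coe_map, RingHom.toMonoidHom_eq_coe, MonoidHom.coe_coe,
      Units.val_pow_eq_pow_val, vu_val m hm] at hval
    rw [hv3 m hm] at hval
    set z : Zm m := ((((((νu m hm)^j0 * (-1)^l.val))⁻¹)^(2^(c-1)) : (Zm m)ˣ) : Zm m) with hz
    have hn : AdjoinRoot.of (fpoly m) z + AdjoinRoot.of (fpoly m) 0 * ω m
        = AdjoinRoot.of (fpoly m) 1 + AdjoinRoot.of (fpoly m) ((2:Zm m)^(m-1)) * ω m := by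
      rw [map_zero, zero_mul, add_zero, map_one, map_pow, map_ofNat]
      exact hval
    exact two_pow_ne m (show m-1 < m by omega) ((normal_inj m (by omega) hn).2).symm
  rw [hk0, pow_zero, mul_one] at hx1
  -- Step 5
  have hcu1 : cu m ((νu m hm)^j0 * (-1)^l.val) = 1 := by
    rw [map_mul]; exact hx1
  have hunits : (νu m hm)^j0 * (-1)^l.val = 1 := by
    apply cu_inj m (by omega)
    rw [hcu1, map_one]
  have hzm : (-3:Zm m)^j0 * (-1)^l.val = 1 := by
    have hval := congrArg (fun u : (Zm m)ˣ => (u : Zm m)) hunits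
    simpa only [Units.val_mul, Units.val_pow_eq_pow_val, nu_val m hm, Units.val_neg,
      Units.val_one] using hval
  have hsq : (-3:Zm m)^(j0*2) = 1 := by
    have hs := congrArg (fun z => z^2) hzm
    simp only [one_pow, mul_pow, ← pow_mul] at hs
    rw [pow_mul' (-1 : Zm m) l.val 2, neg_one_sq, one_pow, mul_one] at hs
    exact hs
  have hdvd2 : 2^(m-2) ∣ j0*2 := by
    have hdd := orderOf_dvd_of_pow_eq_one hsq
    rwa [ord3 m hm] at hdd
  have hj0dvd : 2^(m-3) ∣ j0 := by
    rw [hpow2] at hdvd2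
    exact (Nat.mul_dvd_mul_iff_right (by norm_num : 0 < 2)).mp hdvd2
  obtain ⟨b, hbb⟩ := hj0dvd
  have hjlt : j.val < 2^(m-1) := ZMod.val_lt j
  have hllt : l.val < 2 := ZMod.val_lt l
  have hblt : b < 2 := by
    rw [hj0, hbb, hpow1', hpow2'] at hjlt
    have := Nat.lt_of_mul_lt_mul_left (a := 2) (by omega : 2*(2^(m-3)*b) < 2*(2*2^(m-3)))
    exact Nat.lt_of_mul_lt_mul_left (a := 2^(m-3)) (by omega)
  -- conclude j0 = 0 and l.val = 0
  have hb01 : b = 0 ∨ b = 1 := by omega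
  have hl01 : l.val = 0 ∨ l.val = 1 := by omega
  have hfinal : j0 = 0 ∧ l.val = 0 := by
    rcases hb01 with rfl | rfl
    · rw [mul_zero] at hbb
      subst hbb
      refine ⟨rfl, ?_⟩
      rw [pow_zero, one_mul] at hzm
      rcases hl01 with h | h
      · exact h
      · exfalso
        rw [h, pow_one] at hzm
        have h2 : (2:Zm m)^1 = 0 := by rw [pow_one]; linear_combination -hzm
        exact two_pow_ne m (by omega) h2
    · exfalso
      rw [mul_one] at hbb
      rw [hbb, L1 m hm] at hzm
      rcases hl01 with h | h
      · rw [h, pow_zero, mul_one] at hzm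
        exact L3 m hm hzm
      · rw [h, pow_one] at hzm
        apply L5 m hm
        linear_combination -hzm
  -- conclude x = 1
  have hxadd : Multiplicative.toAdd x = 0 := by
    have h1 : i = 0 := by rwa [← ZMod.val_eq_zero]
    have h2 : j = 0 := by rw [← ZMod.val_eq_zero, hj0, hfinal.1, mul_zero]
    have h3 : k = 0 := by rwa [← ZMod.val_eq_zero]
    have h4 : l = 0 := by rw [← ZMod.val_eq_zero]; exact hfinal.2
    have : Multiplicative.toAdd x = (i, j, k, l) := rfl
    rw [this, h1, h2, h3, h4]
    rfl
  have := congrArg Multiplicative.ofAdd hxadd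
  simpa using this

-- SENTINEL
end EisHelper

open EisHelper in
theorem eisenstein_units_two_pow (m : ℕ) (hm : 3 ≤ m) :
    Nonempty ((EisensteinMod (2 ^ m))ˣ ≃*
      Multiplicative
        (ZMod 3 × ZMod (2 ^ (m - 1)) × ZMod (2 ^ (m - 2)) × ZMod 2)) := by
  haveI : NeZero ((2:ℕ)^m) := ⟨by positivity⟩
  haveI : NeZero ((2:ℕ)^(m-1)) := ⟨by positivity⟩
  haveI : NeZero ((2:ℕ)^(m-2)) := ⟨by positivity⟩
  haveI : Finite (Rm m) := Finite.of_equiv _ (ψ m (by omega))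
  have hdom : Nat.card (Multiplicative (ZMod 3 × ZMod (2^(m-1)) × ZMod (2^(m-2)) × ZMod 2))
      = 3*(2^(m-1)*(2^(m-2)*2)) := by
    rw [Nat.card_congr Multiplicative.toAdd, Nat.card_prod, Nat.card_prod, Nat.card_prod,
      Nat.card_zmod, Nat.card_zmod, Nat.card_zmod, Nat.card_zmod]
  have hcard : Nat.card (Multiplicative (ZMod 3 × ZMod (2^(m-1)) × ZMod (2^(m-2)) × ZMod 2))
      = Nat.card (Rm m)ˣ := by
    rw [card_units_R m (by omega), card_arith m hm, hdom]
  have hbij : Function.Bijective (φ m hm) :=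
    (Nat.bijective_iff_injective_and_card _).mpr ⟨phi_inj m hm, hcard⟩
  exact ⟨(MulEquiv.ofBijective (φ m hm) hbij).symm⟩
end
end

section
/- Let k ≥ 1 and σ = 2^k. In the ring Z_{2^{k+2}}[x]/(x^σ − 1), the element (1 + 2x)^{2^{k+1}} equals 1, but (1 + 2x)^{2^k} equals 1 + 2^{k+1}x + 2^{k+1}x² ≠ 1. Hence the multiplicative order of 1+2x in this ring is 2^{k+1}. -/
open Polynomial

private lemma key_int (m : ℕ) : ∃ r : Polynomial ℤ,
    (1 + 2 * X) ^ (2 ^ (m + 1)) =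
      1 + 2 ^ (m + 2) * (X + X ^ 2) + 2 ^ (m + 3) * r := by
  induction m with
  | zero => exact ⟨0, by norm_num; ring⟩
  | succ m ih =>
    obtain ⟨r, hr⟩ := ih
    refine ⟨r + 2 ^ m * (X + X ^ 2) ^ 2 + 2 ^ (m + 2) * ((X + X ^ 2) * r + r ^ 2), ?_⟩
    have h : 2 ^ (m + 1 + 1) = 2 ^ (m + 1) * 2 := by ring
    rw [h, pow_mul, hr]
    ring

private lemma two_pow_zero (k : ℕ) : (2 : ZMod (2 ^ (k + 2))) ^ (k + 2) = 0 := by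
  have := ZMod.natCast_self (2 ^ (k + 2))
  push_cast at this
  exact_mod_cast this

private lemma key_poly (k : ℕ) (hk : 1 ≤ k) :
    ((1 + 2 * X) ^ (2 ^ k) : Polynomial (ZMod (2 ^ (k + 2)))) =
      1 + C ((2 : ZMod (2 ^ (k + 2))) ^ (k + 1)) * X
        + C ((2 : ZMod (2 ^ (k + 2))) ^ (k + 1)) * X ^ 2 := by
  obtain ⟨m, rfl⟩ : ∃ m, k = m + 1 := ⟨k - 1, (Nat.succ_pred_eq_of_pos hk).symm⟩
  obtain ⟨r, hr⟩ := key_int m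
  set R := ZMod (2 ^ (m + 1 + 2))
  have hmap := congrArg (Polynomial.map (Int.castRingHom R)) hr
  simp only [Polynomial.map_pow, Polynomial.map_add, Polynomial.map_mul,
    Polynomial.map_one, Polynomial.map_ofNat, Polynomial.map_X] at hmap
  have hC : (2 : Polynomial R) ^ (m + 1 + 2) = 0 := by
    rw [← map_ofNat (C : R →+* Polynomial R) 2, ← map_pow, two_pow_zero, map_zero]
  have hC2 : C ((2 : R) ^ (m + 1 + 1)) = (2 : Polynomial R) ^ (m + 1 + 1) := by
    rw [map_pow, map_ofNat]
  rw [hmap, hC2]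
  linear_combination (Polynomial.map (Int.castRingHom R) r) * hC

private lemma key_poly_sq (k : ℕ) (hk : 1 ≤ k) :
    ((1 + 2 * X) ^ (2 ^ (k + 1)) : Polynomial (ZMod (2 ^ (k + 2)))) = 1 := by
  have h : 2 ^ (k + 1) = 2 ^ k * 2 := by ring
  rw [h, pow_mul, key_poly k hk]
  set R := ZMod (2 ^ (k + 2))
  have hC : (2 : Polynomial R) ^ (k + 2) = 0 := by
    rw [← map_ofNat (C : R →+* Polynomial R) 2, ← map_pow, two_pow_zero, map_zero]
  have hC2 : C ((2 : R) ^ (k + 1)) = (2 : Polynomial R) ^ (k + 1) := by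
    rw [map_pow, map_ofNat]
  rw [hC2]
  linear_combination ((X + X ^ 2) + 2 ^ k * (X + X ^ 2) ^ 2) * hC

private lemma not_dvd (k : ℕ) (hk : 1 ≤ k) :
    ¬ ((X ^ (2 ^ k) - 1 : Polynomial (ZMod (2 ^ (k + 2)))) ∣
      C ((2 : ZMod (2 ^ (k + 2))) ^ (k + 1)) * X
        + C ((2 : ZMod (2 ^ (k + 2))) ^ (k + 1)) * X ^ 2) := by
  set R := ZMod (2 ^ (k + 2))
  haveI : Fact (1 < 2 ^ (k + 2)) := ⟨Nat.one_lt_two_pow (by omega)⟩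
  set c : R := (2 : R) ^ (k + 1)
  have hc : c ≠ 0 := by
    intro h
    have : ((2 ^ (k + 1) : ℕ) : R) = 0 := by push_cast; exact h
    rw [ZMod.natCast_eq_zero_iff] at this
    have h1 := Nat.le_of_dvd (Nat.two_pow_pos _) this
    have h2 : (2 : ℕ) ^ (k + 1) < 2 ^ (k + 2) := Nat.pow_lt_pow_right one_lt_two (by omega)
    exact absurd h1 (not_le.mpr h2)
  have hmonic : (X ^ (2 ^ k) - 1 : Polynomial R).Monic := by
    apply monic_X_pow_sub
    simpa using Nat.one_lt_two_pow (by omega)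
  intro hdvd
  rcases Nat.lt_or_ge 2 (2 ^ k) with h2 | h2
  · -- 2^k > 2 : degree argument directly
    obtain ⟨q, hq⟩ := hdvd
    have hq0 : q ≠ 0 := by
      rintro rfl
      rw [mul_zero] at hq
      have := congrArg (fun p => Polynomial.coeff p 1) hq
      simp [coeff_one] at this
      exact hc this
    have hdeg := hmonic.natDegree_mul' hq0
    rw [← hq] at hdeg
    have hd1 : (C c * X + C c * X ^ 2).natDegree ≤ 2 := by
      apply natDegree_add_le_of_degree_le
      · exact (natDegree_C_mul_le _ _).trans (by simp)
      · exact (natDegree_C_mul_le _ _).trans (by simp)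
    have hd2 : (X ^ (2 ^ k) - 1 : Polynomial R).natDegree = 2 ^ k := by
      have := natDegree_X_pow_sub_C (n := 2 ^ k) (r := (1 : R))
      simpa using this
    omega
  · -- 2^k = 2, i.e. k = 1
    have hk2 : 2 ^ k = 2 := by
      have := Nat.one_lt_two_pow (n := k) (by omega)
      omega
    rw [hk2] at hdvd hmonic
    have hdvd2 : (X ^ 2 - 1 : Polynomial R) ∣ C c * X + C c := by
      have : C c * X + C c = (C c * X + C c * X ^ 2) - C c * (X ^ 2 - 1) := by ring
      rw [this]
      exact dvd_sub hdvd (dvd_mul_left _ _)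
    obtain ⟨q, hq⟩ := hdvd2
    have hq0 : q ≠ 0 := by
      rintro rfl
      rw [mul_zero] at hq
      have := congrArg (fun p => Polynomial.coeff p 0) hq
      simp [coeff_one] at this
      exact hc this
    have hdeg := hmonic.natDegree_mul' hq0
    rw [← hq] at hdeg
    have hd1 : (C c * X + C c).natDegree ≤ 1 := by
      apply natDegree_add_le_of_degree_le
      · exact (natDegree_C_mul_le _ _).trans (by simp)
      · simp
    have hd2 : (X ^ 2 - 1 : Polynomial R).natDegree = 2 := by
      have := natDegree_X_pow_sub_C (n := 2) (r := (1 : R))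
      simpa using this
    omega

theorem order_one_add_two_x (k : ℕ) (hk : 1 ≤ k) :
    (Ideal.Quotient.mk
        (Ideal.span {(X ^ (2 ^ k) - 1 : Polynomial (ZMod (2 ^ (k + 2))))})
        (1 + 2 * X)) ^ (2 ^ (k + 1)) = 1 ∧
    (Ideal.Quotient.mk
        (Ideal.span {(X ^ (2 ^ k) - 1 : Polynomial (ZMod (2 ^ (k + 2))))})
        (1 + 2 * X)) ^ (2 ^ k) =
      Ideal.Quotient.mk _ (1 + C ((2 : ZMod (2 ^ (k + 2))) ^ (k + 1)) * X
        + C ((2 : ZMod (2 ^ (k + 2))) ^ (k + 1)) * X ^ 2) ∧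
    (Ideal.Quotient.mk
        (Ideal.span {(X ^ (2 ^ k) - 1 : Polynomial (ZMod (2 ^ (k + 2))))})
        (1 + 2 * X)) ^ (2 ^ k) ≠ 1 ∧
    orderOf (Ideal.Quotient.mk
        (Ideal.span {(X ^ (2 ^ k) - 1 : Polynomial (ZMod (2 ^ (k + 2))))})
        (1 + 2 * X)) = 2 ^ (k + 1) := by
  set R := ZMod (2 ^ (k + 2))
  set I : Ideal (Polynomial R) := Ideal.span {(X ^ (2 ^ k) - 1 : Polynomial R)}
  have h1 : (Ideal.Quotient.mk I (1 + 2 * X)) ^ (2 ^ (k + 1)) = 1 := by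
    rw [← map_pow, key_poly_sq k hk, map_one]
  have h2 : (Ideal.Quotient.mk I (1 + 2 * X)) ^ (2 ^ k) =
      Ideal.Quotient.mk I (1 + C ((2 : R) ^ (k + 1)) * X
        + C ((2 : R) ^ (k + 1)) * X ^ 2) := by
    rw [← map_pow, key_poly k hk]
  have h3 : (Ideal.Quotient.mk I (1 + 2 * X)) ^ (2 ^ k) ≠ 1 := by
    rw [h2]
    intro h
    rw [← map_one (Ideal.Quotient.mk I), Ideal.Quotient.eq] at h
    have hmem : (C ((2 : R) ^ (k + 1)) * X + C ((2 : R) ^ (k + 1)) * X ^ 2) ∈ I := by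
      have : (1 + C ((2 : R) ^ (k + 1)) * X + C ((2 : R) ^ (k + 1)) * X ^ 2) - 1
          = C ((2 : R) ^ (k + 1)) * X + C ((2 : R) ^ (k + 1)) * X ^ 2 := by ring
      rwa [this] at h
    rw [Ideal.mem_span_singleton] at hmem
    exact not_dvd k hk hmem
  refine ⟨h1, h2, h3, ?_⟩
  haveI : Fact (Nat.Prime 2) := ⟨Nat.prime_two⟩
  exact orderOf_eq_prime_pow h3 h1
end

section
/- Let k ≥ 1, σ = 2^k, m ≤ k+1, and let a, b ∈ Z_{2^m} with a odd and b even. Then (a + bx)^{2^k} = 1 in Z_{2^m}[x]/(x^σ − 1). -/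
open Polynomial

lemma one_add_four_pow_two_pow {R : Type*} [CommRing R] (n : ℕ) (c : R) :
    ∃ e : R, (1 + 4 * c) ^ (2 ^ n) = 1 + 2 ^ (n + 2) * e := by
  induction n with
  | zero => exact ⟨c, by ring⟩
  | succ n ih =>
    obtain ⟨e, he⟩ := ih
    refine ⟨e + 2 ^ (n + 1) * e ^ 2, ?_⟩
    rw [pow_succ, pow_mul, he]
    ring

theorem odd_even_pow_eq_one (k m a b : ℕ) (hk : 1 ≤ k) (hm : m ≤ k + 1)
    (ha : Odd a) (hb : Even b) :
    (Ideal.Quotient.mk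
        (Ideal.span {(X ^ (2 ^ k) - 1 : Polynomial (ZMod (2 ^ m)))})
        (C (a : ZMod (2 ^ m)) + C (b : ZMod (2 ^ m)) * X)) ^ (2 ^ k) = 1 := by
  obtain ⟨s, hs⟩ := ha
  obtain ⟨t, ht⟩ := hb
  set mk := Ideal.Quotient.mk
      (Ideal.span {(X ^ (2 ^ k) - 1 : Polynomial (ZMod (2 ^ m)))}) with hmk
  set x : (Polynomial (ZMod (2 ^ m))) ⧸
      Ideal.span {(X ^ (2 ^ k) - 1 : Polynomial (ZMod (2 ^ m)))} := mk X with hx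
  have hcast : mk (C (a : ZMod (2 ^ m)) + C (b : ZMod (2 ^ m)) * X)
      = (a : _) + (b : _) * x := by
    simp only [map_add, map_mul, Polynomial.C_eq_natCast, map_natCast, hx]
  rw [hcast]
  -- square once
  have hsq : ((a : _) + (b : _) * x) ^ 2
      = 1 + 4 * ((s : _) ^ 2 + (s : _) + (a : _) * (t : _) * x
        + (t : _) ^ 2 * x ^ 2) := by
    subst hs ht
    push_cast
    ring
  obtain ⟨k', hk'⟩ := Nat.exists_eq_add_of_le hk
  have hpow : (2 : ℕ) ^ k = 2 * 2 ^ k' := by rw [hk', pow_add, pow_one]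
  obtain ⟨e, he⟩ := one_add_four_pow_two_pow k'
    ((s : _) ^ 2 + (s : _) + (a : _) * (t : _) * x + (t : _) ^ 2 * x ^ 2)
  have h2m : (2 : (Polynomial (ZMod (2 ^ m))) ⧸
      Ideal.span {(X ^ (2 ^ k) - 1 : Polynomial (ZMod (2 ^ m)))}) ^ m = 0 := by
    have h1 : ((2 ^ m : ℕ) : (Polynomial (ZMod (2 ^ m))) ⧸
        Ideal.span {(X ^ (2 ^ k) - 1 : Polynomial (ZMod (2 ^ m)))}) = 0 := by
      rw [← map_natCast (mk.comp (Polynomial.C)) (2 ^ m), ZMod.natCast_self, map_zero]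
    push_cast at h1
    exact h1
  have hzero : (2 : (Polynomial (ZMod (2 ^ m))) ⧸
      Ideal.span {(X ^ (2 ^ k) - 1 : Polynomial (ZMod (2 ^ m)))}) ^ (k + 1) = 0 := by
    obtain ⟨d, hd⟩ := Nat.exists_eq_add_of_le hm
    rw [hd, pow_add, h2m, zero_mul]
  calc ((a : _) + (b : _) * x) ^ (2 ^ k)
      = (((a : _) + (b : _) * x) ^ 2) ^ (2 ^ k') := by rw [← pow_mul, ← hpow]
    _ = 1 + 2 ^ (k' + 2) * e := by rw [hsq, he]
    _ = 1 + 2 ^ (k + 1) * e := by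
        have h : k' + 2 = k + 1 := by omega
        rw [h]
    _ = 1 := by rw [hzero, zero_mul, add_zero]
end
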